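/- Let T > 0 and let A : ℝ → ℂ^{N×N} be a continuous, T-periodic matrix-valued function. Let X : ℝ → ℂ^{N×N} be the fundamental solution, i.e., X is differentiable with X'(t) = A(t)·X(t) for all t ∈ ℝ and X(0) = Id. Then there exist a constant matrix F ∈ ℂ^{N×N} and a T-periodic matrix-valued function P : ℝ → ℂ^{N×N} such that X(t) = P(t)·exp(tF) for all t ∈ ℝ, where exp denotes the matrix exponential. -/

import Mathlib

open NormedSpace Polynomial Set

namespace FloquetAux

variable {B : Type*} [NormedCommRing B] [NormedAlgebra ℂ B] [CompleteSpace B]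




variable {B : Type*} [NormedCommRing B] [NormedAlgebra ℂ B] [CompleteSpace B]

noncomputable instance instQB : NormedAlgebra ℚ B := NormedAlgebra.restrictScalars ℚ ℂ B

/-- If `l 0 = 0`, `h 0 = 1` and `h' = l' * h`, then `exp (l 1) = h 1`. -/
lemma exp_eq_of_ode (l h l' : ℝ → B)
    (hl : ∀ z, HasDerivAt l (l' z) z)
    (hh : ∀ z, HasDerivAt h (l' z * h z) z)
    (hl0 : l 0 = 0) (hh0 : h 0 = 1) : exp (l 1) = h 1 := by
  have hexp : ∀ z : ℝ, HasDerivAt (fun z => exp (-l z))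
      (exp (-l z) * (-l' z)) z := by
    intro z
    have h1 : HasFDerivAt (exp) (exp (-l z) • (1 : B →L[ℂ] B)) (-l z) :=
      hasFDerivAt_exp (𝕂 := ℂ)
    have h2 : HasDerivAt (fun z => -l z) (-l' z) z := (hl z).neg
    have := (h1.restrictScalars ℝ).comp_hasDerivAt z h2
    simpa [smul_eq_mul, Function.comp_def] using this
  have key : ∀ z : ℝ, HasDerivAt (fun z => exp (-l z) * h z) 0 z := by
    intro z
    have := (hexp z).fun_mul (hh z)
    convert this using 1
    rw [mul_comm (exp (-l z) * (-l' z))]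
    ring
  have hconst : (fun z => exp (-l z) * h z) 1 = (fun z => exp (-l z) * h z) 0 :=
    is_const_of_deriv_eq_zero (fun z => (key z).differentiableAt)
      (fun z => (key z).deriv) 1 0
  simp only [hl0, hh0, neg_zero, exp_zero, mul_one, one_mul] at hconst
  have h3 : exp (l 1) * (exp (-l 1) * h 1) = exp (l 1) * 1 :=
    congrArg (fun w => exp (l 1) * w) hconst
  rw [← mul_assoc, ← exp_add, add_neg_cancel, exp_zero, one_mul, mul_one] at h3
  exact h3.symm


/-- `exp` of the truncated logarithm series of `1 + n` for nilpotent `n`. -/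
lemma exp_truncLog (n : B) (m : ℕ) (hm : n ^ m = 0) :
    exp (∑ k ∈ Finset.range m, ((-1 : ℂ) ^ k / (k + 1)) • n ^ (k + 1)) = 1 + n := by
  have hm' : n ^ (m + 1) = 0 := by rw [pow_succ, hm, zero_mul]
  have main := exp_eq_of_ode
    (l := fun z : ℝ => ∑ k ∈ Finset.range m,
        (((-1 : ℂ) ^ k / (k + 1)) * (z : ℂ) ^ (k + 1)) • n ^ (k + 1))
    (h := fun z : ℝ => 1 + (z : ℂ) • n)
    (l' := fun z : ℝ => ∑ k ∈ Finset.range m,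
        (((-1 : ℂ) ^ k) * (z : ℂ) ^ k) • n ^ (k + 1))
    (hl := by
      intro z
      apply HasDerivAt.fun_sum
      intro k _
      have hpow : HasDerivAt (fun y : ℝ => ((y : ℂ)) ^ (k + 1))
          (((k : ℂ) + 1) * (z : ℂ) ^ k) z := by
        simpa using (hasDerivAt_pow (k + 1) ((z : ℂ))).comp_ofReal
      have := ((hpow.const_mul ((-1 : ℂ) ^ k / (k + 1))).smul_const (n ^ (k + 1)))
      convert this using 2
      have hk : ((k : ℂ) + 1) ≠ 0 := Nat.cast_add_one_ne_zero k
      field_simp)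
    (hh := by
      intro z
      have h1 : HasDerivAt (fun y : ℝ => ((y : ℂ)) • n) ((1 : ℂ) • n) z := by
        exact ((hasDerivAt_id ((z:ℂ))).comp_ofReal).smul_const n
      have h2 := h1.const_add (1 : B)
      convert h2 using 1
      · rfl
      rw [one_smul]
      -- telescoping identity : l' z * (1 + z • n) = n
      set a : ℕ → B := fun k => (((-1 : ℂ) ^ k) * (z : ℂ) ^ k) • n ^ (k + 1) with ha
      have expand : (∑ k ∈ Finset.range m, a k) * (1 + (z : ℂ) • n)
          = ∑ k ∈ Finset.range m, (a k - a (k + 1)) := by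
        rw [mul_add, mul_one, Finset.sum_mul, ← Finset.sum_add_distrib]
        refine Finset.sum_congr rfl fun k _ => ?_
        have : a k * ((z : ℂ) • n) = -a (k + 1) := by
          rw [ha]
          simp only [smul_mul_assoc, mul_smul_comm, smul_smul, ← pow_succ]
          rw [← neg_smul]
          congr 1
          ring
        rw [this]
        ring
      rw [expand, Finset.sum_range_sub']
      have h0 : a 0 = n := by simp [ha]
      have hma : a m = 0 := by rw [ha]; simp [hm']
      rw [h0, hma, sub_zero])
    (hl0 := by simp)
    (hh0 := by simp)
  simpa using main

/-- `exp` of a scalar multiple of an idempotent. -/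
lemma exp_smul_idem (e : B) (he : e * e = e) (c : ℂ) :
    exp (c • e) = 1 + (Complex.exp c - 1) • e := by
  have main := exp_eq_of_ode
    (l := fun z : ℝ => ((z : ℂ) * c) • e)
    (h := fun z : ℝ => 1 + (Complex.exp ((z : ℂ) * c) - 1) • e)
    (l' := fun _ : ℝ => c • e)
    (hl := by
      intro z
      have : HasDerivAt (fun y : ℝ => (y : ℂ) * c) c z := by
        simpa using (hasDerivAt_mul_const (c := c)).comp_ofReal (z := z)
      exact this.smul_const e)
    (hh := by
      intro z
      have hexp : HasDerivAt (fun y : ℝ => Complex.exp ((y : ℂ) * c))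
          (Complex.exp ((z : ℂ) * c) * c) z := by
        have := (Complex.hasDerivAt_exp ((z : ℂ) * c)).comp ((z:ℂ))
          (hasDerivAt_mul_const (c := c))
        exact this.comp_ofReal
      have := ((hexp.sub_const 1).smul_const e).const_add (1 : B)
      convert this using 1
      · rfl
      rw [mul_add, mul_one, mul_smul_comm, smul_mul_assoc, he, smul_smul, ← add_smul]
      congr 1
      ring)
    (hl0 := by simp)
    (hh0 := by simp)
  simpa using main


lemma prod_one_add {ι : Type*} (s : Finset ι) (S : ι → B)
    (h : ∀ i ∈ s, ∀ j ∈ s, i ≠ j → S i * S j = 0) :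
    ∏ i ∈ s, (1 + S i) = 1 + ∑ i ∈ s, S i := by
  classical
  induction s using Finset.cons_induction with
  | empty => simp
  | cons a s ha ih =>
    rw [Finset.prod_cons, Finset.sum_cons,
      ih (fun i hi j hj hij => h i (Finset.mem_cons_of_mem hi) j (Finset.mem_cons_of_mem hj) hij)]
    have hcross : S a * ∑ i ∈ s, S i = 0 := by
      rw [Finset.mul_sum]
      refine Finset.sum_eq_zero fun i hi => ?_
      exact h a (Finset.mem_cons_self a s) i (Finset.mem_cons_of_mem hi)
        (fun hai => ha (hai ▸ hi))
    rw [add_mul, one_mul, mul_add, mul_one, hcross]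
    ring

/-- Every element killed by a polynomial with nonzero roots is an exponential. -/
theorem exists_exp_eq (u : B) (p : ℂ[X]) (hp : p ≠ 0)
    (hroots : ∀ μ ∈ p.roots, μ ≠ 0) (hu : aeval u p = 0) : ∃ v : B, exp v = u := by
  classical
  set R : Finset ℂ := p.roots.toFinset with hR
  set q : ℂ → ℂ[X] := fun μ => (X - C μ) ^ (p.roots.count μ) with hq
  -- the factorization of p
  have hsplit : p = C p.leadingCoeff * ∏ μ ∈ R, q μ := by
    conv_lhs => rw [(IsAlgClosed.splits p).eq_prod_roots]
    rw [Finset.prod_multiset_map_count]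
  -- the product of the q's kills u
  have hprod0 : aeval u (∏ μ ∈ R, q μ) = 0 := by
    have hlc : IsUnit (algebraMap ℂ B p.leadingCoeff) :=
      (IsUnit.map (algebraMap ℂ B)) (isUnit_iff_ne_zero.mpr (leadingCoeff_ne_zero.mpr hp))
    have := hu
    rw [hsplit, map_mul, aeval_C] at this
    exact (hlc.mul_right_eq_zero).mp this
  have hdvd : ∀ r : ℂ[X], (∏ μ ∈ R, q μ) ∣ r → aeval u r = 0 := by
    rintro r ⟨w, rfl⟩
    rw [map_mul, hprod0, zero_mul]
  -- coprimality
  have hcop : ∀ μ ∈ R, ∀ ν ∈ R, μ ≠ ν → IsCoprime (q μ) (q ν) := by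
    intro μ _ ν _ hμν
    apply IsCoprime.pow
    refine ⟨C ((ν - μ)⁻¹), -C ((ν - μ)⁻¹), ?_⟩
    have h1 : C ((ν - μ)⁻¹) * (X - C μ) + -C ((ν - μ)⁻¹) * (X - C ν)
        = C ((ν - μ)⁻¹) * C (ν - μ) := by
      rw [map_sub]; ring
    rw [h1, ← map_mul, inv_mul_cancel₀ (sub_ne_zero.mpr (Ne.symm hμν)), map_one]
  -- Bezout idempotent polynomials
  have hbez : ∀ μ : ℂ, ∃ w : ℂ[X], μ ∈ R →
      (q μ ∣ 1 - w) ∧ ∀ ν ∈ R, ν ≠ μ → q ν ∣ w := by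
    intro μ
    by_cases hμ : μ ∈ R
    · have hco : IsCoprime (q μ) (∏ ν ∈ R.erase μ, q ν) :=
        IsCoprime.prod_right fun ν hν =>
          hcop μ hμ ν (Finset.mem_of_mem_erase hν) (Ne.symm (Finset.ne_of_mem_erase hν))
      obtain ⟨a, b, hab⟩ := hco
      refine ⟨b * ∏ ν ∈ R.erase μ, q ν, fun _ => ⟨⟨a, by linear_combination hab.symm⟩, ?_⟩⟩
      intro ν hν hνμ
      exact Dvd.dvd.mul_left (Finset.dvd_prod_of_mem q (Finset.mem_erase.mpr ⟨hνμ, hν⟩)) b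
    · exact ⟨0, fun h => absurd h hμ⟩
  choose e he using hbez
  set E : ℂ → B := fun μ => aeval u (e μ) with hE
  -- pairwise coprime on R as a set
  have hpairwise : (↑R : Set ℂ).Pairwise (Function.onFun IsCoprime q) :=
    fun μ hμ ν hν hμν => hcop μ hμ ν hν hμν
  -- key divisibility producer
  have hkill : ∀ r : ℂ[X], (∀ μ ∈ R, q μ ∣ r) → aeval u r = 0 := by
    intro r hr
    exact hdvd r (Finset.prod_dvd_of_coprime hpairwise hr)
  -- sum of idempotents is 1
  have hEsum : ∑ μ ∈ R, E μ = 1 := by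
    have : aeval u (1 - ∑ μ ∈ R, e μ) = 0 := by
      apply hkill
      intro μ hμ
      have h1 : (1 : ℂ[X]) - ∑ ν ∈ R, e ν
          = (1 - e μ) - ∑ ν ∈ R.erase μ, e ν := by
        rw [← Finset.add_sum_erase _ _ hμ]; ring
      rw [h1]
      refine dvd_sub ((he μ hμ).1) (Finset.dvd_sum fun ν hν => ?_)
      exact (he ν (Finset.mem_of_mem_erase hν)).2 μ hμ (Finset.ne_of_mem_erase hν).symm
    rw [map_sub, map_one, map_sum] at this
    exact (sub_eq_zero.mp this).symm
  -- orthogonality of idempotents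
  have hEE : ∀ μ ∈ R, ∀ ν ∈ R, μ ≠ ν → E μ * E ν = 0 := by
    intro μ hμ ν hν hμν
    have : aeval u (e μ * e ν) = 0 := by
      apply hkill
      intro ρ hρ
      by_cases hρμ : ρ = μ
      · subst hρμ
        exact Dvd.dvd.mul_left ((he ν hν).2 ρ hρ hμν) (e ρ)
      · exact Dvd.dvd.mul_right ((he μ hμ).2 ρ hρ hρμ) (e ν)
    rwa [map_mul] at this
  -- idempotency
  have hEidem : ∀ μ ∈ R, E μ * E μ = E μ := by
    intro μ hμ
    have : aeval u (e μ * e μ - e μ) = 0 := by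
      apply hkill
      intro ρ hρ
      by_cases hρμ : ρ = μ
      · subst hρμ
        have : e ρ * e ρ - e ρ = e ρ * -(1 - e ρ) := by ring
        rw [this]
        exact Dvd.dvd.mul_left ((he ρ hρ).1.neg_right) (e ρ)
      · have : e μ * e μ - e μ = e μ * (e μ - 1) := by ring
        rw [this]
        exact Dvd.dvd.mul_right ((he μ hμ).2 ρ hρ hρμ) (e μ - 1)
    rw [map_sub, map_mul, sub_eq_zero] at this
    exact this
  -- the nilpotent parts
  set Nn : ℂ → B := fun μ => aeval u ((X - C μ) * e μ) with hNn
  have hNval : ∀ μ, Nn μ = (u - algebraMap ℂ B μ) * E μ := by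
    intro μ
    rw [hNn]
    simp [hE, map_mul, map_sub, aeval_X, aeval_C]
  have hNnil : ∀ μ ∈ R, Nn μ ^ (p.roots.count μ) = 0 := by
    intro μ hμ
    have hc1 : p.roots.count μ ≠ 0 :=
      Nat.pos_iff_ne_zero.mp (Multiset.count_pos.mpr (Multiset.mem_toFinset.mp hμ))
    have : aeval u (((X - C μ) * e μ) ^ (p.roots.count μ)) = 0 := by
      apply hkill
      intro ρ hρ
      rw [mul_pow]
      by_cases hρμ : ρ = μ
      · subst hρμ
        exact Dvd.dvd.mul_right dvd_rfl _
      · exact Dvd.dvd.mul_left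
          (dvd_pow ((he μ hμ).2 ρ hρ hρμ) hc1) _
    rwa [map_pow] at this
  have hENmul : ∀ μ ∈ R, E μ * Nn μ = Nn μ := by
    intro μ hμ
    rw [hNval μ]
    calc E μ * ((u - algebraMap ℂ B μ) * E μ)
        = (u - algebraMap ℂ B μ) * (E μ * E μ) := by ring
      _ = (u - algebraMap ℂ B μ) * E μ := by rw [hEidem μ hμ]
  -- building the logarithm
  set Lam : ℂ → B := fun μ => ∑ k ∈ Finset.range (p.roots.count μ),
      ((-1 : ℂ) ^ k / (k + 1)) • ((μ⁻¹ • Nn μ) ^ (k + 1)) with hLam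
  set L : B := ∑ μ ∈ R, ((Complex.log μ) • E μ + Lam μ) with hL
  refine ⟨L, ?_⟩
  have hterm : ∀ μ ∈ R, exp ((Complex.log μ) • E μ + Lam μ)
      = 1 + (((μ : ℂ) - 1) • E μ + Nn μ) := by
    intro μ hμ
    have hμ0 : (μ : ℂ) ≠ 0 := hroots μ (Multiset.mem_toFinset.mp hμ)
    have hnil : (μ⁻¹ • Nn μ) ^ (p.roots.count μ) = 0 := by
      rw [_root_.smul_pow, hNnil μ hμ, smul_zero]
    have h1 : exp ((Complex.log μ) • E μ) = 1 + (μ - 1) • E μ := by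
      rw [exp_smul_idem (E μ) (hEidem μ hμ), Complex.exp_log hμ0]
    have h2 : exp (Lam μ) = 1 + μ⁻¹ • Nn μ := exp_truncLog _ _ hnil
    rw [exp_add, h1, h2]
    have hEn : E μ * (μ⁻¹ • Nn μ) = μ⁻¹ • Nn μ := by
      rw [mul_smul_comm, hENmul μ hμ]
    calc (1 + (μ - 1) • E μ) * (1 + μ⁻¹ • Nn μ)
        = 1 + (μ - 1) • E μ + (μ⁻¹ • Nn μ + (μ - 1) • (E μ * (μ⁻¹ • Nn μ))) := by
          rw [mul_add, mul_one, add_mul, one_mul, smul_mul_assoc]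
      _ = 1 + ((μ - 1) • E μ + Nn μ) := by
          rw [hEn, smul_smul, ← add_smul]
          have : (μ⁻¹ + (μ - 1) * μ⁻¹) = 1 := by field_simp; ring
          rw [this, one_smul]
          ring
  -- multiply everything out
  set S : ℂ → B := fun μ => ((μ : ℂ) - 1) • E μ + Nn μ with hS
  have hSE : ∀ μ ∈ R, E μ * S μ = S μ := by
    intro μ hμ
    rw [hS]
    simp only []
    rw [mul_add, mul_smul_comm, hEidem μ hμ, hENmul μ hμ]
  have hSS : ∀ μ ∈ R, ∀ ν ∈ R, μ ≠ ν → S μ * S ν = 0 := by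
    intro μ hμ ν hν hμν
    calc S μ * S ν = (E μ * S μ) * (E ν * S ν) := by rw [hSE μ hμ, hSE ν hν]
      _ = (E μ * E ν) * (S μ * S ν) := by ring
      _ = 0 := by rw [hEE μ hμ ν hν hμν, zero_mul]
  have hexpL : exp L = 1 + ∑ μ ∈ R, S μ := by
    rw [hL, exp_sum]
    rw [Finset.prod_congr rfl (fun μ hμ => hterm μ hμ)]
    exact prod_one_add R S hSS
  rw [hexpL]
  -- final identification with u
  have hfinal : ∀ μ ∈ R, E μ + S μ = u * E μ := by
    intro μ hμ
    have h1 : Nn μ = u * E μ - μ • E μ := by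
      rw [hNval μ, sub_mul, Algebra.smul_def]
    have h2 : ((μ : ℂ) - 1) • E μ = μ • E μ - E μ := by rw [sub_smul, one_smul]
    rw [hS]
    simp only []
    rw [h1, h2]
    abel
  calc 1 + ∑ μ ∈ R, S μ = ∑ μ ∈ R, (E μ + S μ) := by
        have hd : ∑ μ ∈ R, (E μ + S μ) = (∑ μ ∈ R, E μ) + ∑ μ ∈ R, S μ :=
          Finset.sum_add_distrib
        rw [hd, hEsum]
    _ = ∑ μ ∈ R, u * E μ := Finset.sum_congr rfl hfinal
    _ = u * ∑ μ ∈ R, E μ := by rw [Finset.mul_sum]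
    _ = u := by rw [hEsum, mul_one]


/-- Every invertible complex matrix has a logarithm. -/
theorem exists_exp_eq_matrix {n : ℕ} (M : Matrix (Fin n) (Fin n) ℂ)
    (hM : IsUnit M.det) : ∃ L : Matrix (Fin n) (Fin n) ℂ, exp L = M := by
  letI : NormedRing (Matrix (Fin n) (Fin n) ℂ) := Matrix.linftyOpNormedRing
  letI : NormedAlgebra ℂ (Matrix (Fin n) (Fin n) ℂ) := Matrix.linftyOpNormedAlgebra
  set A : Subalgebra ℂ (Matrix (Fin n) (Fin n) ℂ) := Algebra.adjoin ℂ {M} with hA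
  letI : CommRing A := Algebra.adjoinCommRingOfComm ℂ
    (by rintro a rfl b rfl; rfl)
  letI : NormedCommRing A := { (inferInstance : NormedRing A) with
    mul_comm := mul_comm }
  haveI : FiniteDimensional ℂ A :=
    inferInstanceAs (FiniteDimensional ℂ (Subalgebra.toSubmodule A))
  haveI : IsUniformAddGroup A := SeminormedAddCommGroup.to_isUniformAddGroup
  haveI : CompleteSpace A := FiniteDimensional.complete ℂ A
  set u : A := ⟨M, Algebra.self_mem_adjoin_singleton ℂ M⟩ with hu
  have hup : aeval u M.charpoly = 0 := by
    have hval : (A.val (aeval u M.charpoly)) = (0 : Matrix (Fin n) (Fin n) ℂ) := by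
      rw [← Polynomial.aeval_algHom_apply]
      exact Matrix.aeval_self_charpoly M
    exact Subtype.ext hval
  have hroots : ∀ μ ∈ M.charpoly.roots, μ ≠ 0 := by
    intro μ hμ h0
    subst h0
    have hev : M.charpoly.eval 0 = 0 := (Polynomial.isRoot_of_mem_roots hμ)
    have hdet := Matrix.det_eq_sign_charpoly_coeff M
    rw [Polynomial.coeff_zero_eq_eval_zero, hev, mul_zero] at hdet
    rw [hdet] at hM
    exact (by simpa using hM : IsUnit (0 : ℂ)).ne_zero rfl
  obtain ⟨v, hv⟩ := exists_exp_eq u M.charpoly (M.charpoly_monic.ne_zero) hroots hup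
  refine ⟨(v : Matrix (Fin n) (Fin n) ℂ), ?_⟩
  have := map_exp (A.val) (continuous_subtype_val) v
  rw [hv] at this
  exact this.symm


/-- Uniqueness for the linear matrix ODE `Y' = A t * Y` (stated entrywise). -/
lemma ode_unique {n : ℕ} (A : ℝ → Matrix (Fin n) (Fin n) ℂ) (hA : Continuous A)
    (f g : ℝ → Matrix (Fin n) (Fin n) ℂ) (t₀ : ℝ)
    (hf : ∀ (i j : Fin n) (t : ℝ),
      HasDerivAt (fun s => f s i j) (∑ k, A t i k * f t k j) t)
    (hg : ∀ (i j : Fin n) (t : ℝ),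
      HasDerivAt (fun s => g s i j) (∑ k, A t i k * g t k j) t)
    (h₀ : f t₀ = g t₀) : ∀ τ : ℝ, f τ = g τ := by
  intro τ
  -- view everything in the Pi space E
  set E := Fin n → Fin n → ℂ with hEdef
  set F : ℝ → E := fun t i j => f t i j with hF
  set G : ℝ → E := fun t i j => g t i j with hG
  set a : ℝ := min t₀ τ - 1 with ha
  set b : ℝ := max t₀ τ + 1 with hb
  have hab : a < b := by
    have h1 : min t₀ τ ≤ max t₀ τ := le_trans (min_le_left _ _) (le_max_left _ _)
    simp only [ha, hb]; linarith
  -- clamp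
  set c : ℝ → ℝ := fun t => max a (min b t) with hc
  have hcmem : ∀ t, c t ∈ Icc a b := by
    intro t
    constructor
    · exact le_max_left _ _
    · simp only [hc, max_le_iff]
      exact ⟨le_of_lt hab, min_le_left _ _⟩
  have hcid : ∀ s ∈ Icc a b, c s = s := by
    intro s hs
    simp only [hc]
    rw [min_eq_right hs.2, max_eq_right hs.1]
  have hceq : ∀ t ∈ Ioo a b, c t = t := fun t ht =>
    hcid t ⟨le_of_lt ht.1, le_of_lt ht.2⟩
  -- bound on A over the compact interval
  have hcc : Continuous c := Continuous.max continuous_const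
    (Continuous.min continuous_const continuous_id)
  have hAcont : Continuous fun t => (∑ i, ∑ k, ‖A (c t) i k‖ : ℝ) := by
    apply continuous_finset_sum
    intro i _
    apply continuous_finset_sum
    intro k _
    exact continuous_norm.comp ((hA.comp hcc).matrix_elem i k)
  obtain ⟨C₀, hC₀⟩ := (isCompact_Icc (a := a) (b := b)).exists_bound_of_continuousOn
    hAcont.continuousOn
  -- entrywise bound, valid for ALL real t thanks to the clamping
  have hent : ∀ (t : ℝ) (i k : Fin n), ‖A (c t) i k‖ ≤ C₀ := by
    intro t i k
    have h1 := hC₀ (c t) (hcmem t)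
    rw [hcid (c t) (hcmem t)] at h1
    have h2 : ‖A (c t) i k‖ ≤ ∑ i', ∑ k', ‖A (c t) i' k'‖ := by
      have hterm : ‖A (c t) i k‖ ≤ ∑ k', ‖A (c t) i k'‖ :=
        Finset.single_le_sum (f := fun k' => ‖A (c t) i k'‖)
          (fun _ _ => norm_nonneg _) (Finset.mem_univ k)
      refine le_trans hterm ?_
      exact Finset.single_le_sum (f := fun i' => ∑ k', ‖A (c t) i' k'‖)
        (fun _ _ => Finset.sum_nonneg fun _ _ => norm_nonneg _) (Finset.mem_univ i)
    calc ‖A (c t) i k‖ ≤ ∑ i', ∑ k', ‖A (c t) i' k'‖ := h2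
      _ ≤ ‖(∑ i', ∑ k', ‖A (c t) i' k'‖ : ℝ)‖ := le_abs_self _
      _ ≤ C₀ := h1
  have hC₀0 : 0 ≤ C₀ := le_trans (norm_nonneg _) (hC₀ a ⟨le_refl a, le_of_lt hab⟩)
  -- the (time-clamped) vector field
  set v : ℝ → E → E := fun t y i j => ∑ k, A (c t) i k * y k j with hv
  set K : NNReal := Real.toNNReal (n * C₀) with hK
  have hlip : ∀ t, LipschitzWith K (v t) := by
    intro t
    apply LipschitzWith.of_dist_le_mul
    intro y y'
    rw [dist_eq_norm, dist_eq_norm]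
    have hKcoe : (K : ℝ) = n * C₀ := Real.coe_toNNReal _ (by positivity)
    rw [hKcoe]
    have hnonneg : (0:ℝ) ≤ n * C₀ * ‖y - y'‖ := by positivity
    rw [pi_norm_le_iff_of_nonneg hnonneg]
    intro i
    rw [pi_norm_le_iff_of_nonneg hnonneg]
    intro j
    have hentry : (v t y - v t y') i j = ∑ k, A (c t) i k * (y k j - y' k j) := by
      show v t y i j - v t y' i j = _
      rw [hv]
      simp only []
      rw [← Finset.sum_sub_distrib]
      exact Finset.sum_congr rfl fun k _ => by ring
    rw [hentry]
    calc ‖∑ k, A (c t) i k * (y k j - y' k j)‖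
        ≤ ∑ k, ‖A (c t) i k * (y k j - y' k j)‖ := norm_sum_le _ _
      _ ≤ ∑ _k : Fin n, C₀ * ‖y - y'‖ := by
          apply Finset.sum_le_sum
          intro k _
          rw [norm_mul]
          have h1 : ‖A (c t) i k‖ ≤ C₀ := hent t i k
          have h2 : ‖y k j - y' k j‖ ≤ ‖y - y'‖ := by
            have i1 : ‖(y - y') k j‖ ≤ ‖(y - y') k‖ := norm_le_pi_norm ((y - y') k) j
            have i2 : ‖(y - y') k‖ ≤ ‖y - y'‖ := norm_le_pi_norm (y - y') k
            exact le_trans i1 i2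
          exact mul_le_mul h1 h2 (norm_nonneg _) hC₀0
      _ = n * C₀ * ‖y - y'‖ := by
          rw [Finset.sum_const, Finset.card_univ, Fintype.card_fin, nsmul_eq_mul]
          ring
  -- solutions as curves in E
  have hF' : ∀ t, HasDerivAt F (fun i j => ∑ k, A t i k * f t k j) t := fun t =>
    hasDerivAt_pi.mpr fun i => hasDerivAt_pi.mpr fun j => hf i j t
  have hG' : ∀ t, HasDerivAt G (fun i j => ∑ k, A t i k * g t k j) t := fun t =>
    hasDerivAt_pi.mpr fun i => hasDerivAt_pi.mpr fun j => hg i j t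
  have hFd : ∀ t ∈ Ioo a b, HasDerivAt F (v t (F t)) t := by
    intro t ht
    have := hF' t
    convert this using 1
    rw [hv]
    simp only []
    rw [hceq t ht]
  have hGd : ∀ t ∈ Ioo a b, HasDerivAt G (v t (G t)) t := by
    intro t ht
    have := hG' t
    convert this using 1
    rw [hv]
    simp only []
    rw [hceq t ht]
  have ht₀ : t₀ ∈ Ioo a b := by
    constructor
    · simp only [ha]
      have := min_le_left t₀ τ
      linarith
    · simp only [hb]
      have := le_max_left t₀ τ
      linarith
  have hτ : τ ∈ Icc a b := by
    constructor
    · simp only [ha]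
      have := min_le_right t₀ τ
      linarith
    · simp only [hb]
      have := le_max_right t₀ τ
      linarith
  have key : EqOn F G (Icc a b) :=
    ODE_solution_unique_of_mem_Icc (v := v) (s := fun _ => univ) (K := K)
      (fun t _ => (hlip t).lipschitzOnWith)
      ht₀
      (fun t _ => ((hF' t).continuousAt).continuousWithinAt)
      hFd (fun _ _ => mem_univ _)
      (fun t _ => ((hG' t).continuousAt).continuousWithinAt)
      hGd (fun _ _ => mem_univ _)
      (by rw [hF, hG]; simp only []; rw [h₀])
  have := key hτ
  funext i j
  exact congrFun (congrFun this i) j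

end FloquetAux

open FloquetAux

/-- **Floquet's theorem.** Let `T > 0` and let `A : ℝ → ℂ^{N×N}` be a continuous,
`T`-periodic matrix-valued function. Let `X` be the fundamental solution, i.e.,
`X'(t) = A(t) * X(t)` (entrywise derivatives) and `X 0 = 1`. Then there is a constant
matrix `F` and a `T`-periodic matrix function `P` with `X t = P t * exp (t • F)`. -/
theorem floquet_theorem {N : ℕ}
    (T : ℝ) (hT : 0 < T)
    (A X : ℝ → Matrix (Fin N) (Fin N) ℂ)
    (hA_cont : Continuous A)
    (hA_per : ∀ t : ℝ, A (t + T) = A t)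
    (hX_deriv : ∀ (i j : Fin N) (t : ℝ),
      HasDerivAt (fun s => X s i j) ((A t * X t) i j) t)
    (hX0 : X 0 = 1) :
    ∃ (F : Matrix (Fin N) (Fin N) ℂ) (P : ℝ → Matrix (Fin N) (Fin N) ℂ),
      (∀ t : ℝ, P (t + T) = P t) ∧
      (∀ t : ℝ, X t = P t * NormedSpace.exp (t • F)) := by
  -- entrywise derivative in sum form
  have hX' : ∀ (i j : Fin N) (t : ℝ),
      HasDerivAt (fun s => X s i j) (∑ k, A t i k * X t k j) t := by
    intro i j t
    have := hX_deriv i j t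
    rwa [Matrix.mul_apply] at this
  -- step 1 : X (s + T) = X s * X T
  have hXmul : ∀ s : ℝ, X (s + T) = X s * X T := by
    have := ode_unique A hA_cont (fun t => X (t + T)) (fun t => X t * X T) 0
      (by
        intro i j t
        have := (hX' i j (t + T)).comp_add_const t T
        convert this using 1
        · rfl
        rw [hA_per t])
      (by
        intro i j t
        have hder : HasDerivAt (fun s => ∑ k, X s i k * X T k j)
            (∑ k, (∑ k', A t i k' * X t k' k) * X T k j) t := by
          apply HasDerivAt.fun_sum
          intro k _
          exact (hX' i k t).mul_const (X T k j)
        have hfun : (fun s => (X s * X T) i j) = (fun s => ∑ k, X s i k * X T k j) := by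
          funext s; rw [Matrix.mul_apply]
        have hgoal : (∑ k, A t i k * (X t * X T) k j)
            = ∑ k, (∑ k', A t i k' * X t k' k) * X T k j := by
          have h1 : (∑ k, A t i k * (X t * X T) k j) = (A t * (X t * X T)) i j := by
            rw [Matrix.mul_apply]
          have h2 : (∑ k, (∑ k', A t i k' * X t k' k) * X T k j)
              = ((A t * X t) * X T) i j := by
            rw [Matrix.mul_apply]
            exact Finset.sum_congr rfl fun k _ => by rw [Matrix.mul_apply]
          rw [h1, h2, mul_assoc]
        show HasDerivAt (fun s => (X s * X T) i j) _ t
        rw [hfun, hgoal]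
        exact hder)
      (by show X (0 + T) = X 0 * X T; rw [zero_add, hX0, one_mul])
    intro s
    exact this s
  -- step 2 : X T is invertible
  have hXTdet : IsUnit (X T).det := by
    rw [isUnit_iff_ne_zero]
    intro hdet
    obtain ⟨v, hv0, hv⟩ := (Matrix.exists_mulVec_eq_zero_iff).mpr hdet
    set Cm : Matrix (Fin N) (Fin N) ℂ := Matrix.of (fun i _ => v i) with hCm
    have hXC : X T * Cm = 0 := by
      funext i j
      rw [Matrix.mul_apply]
      have : (X T).mulVec v i = 0 := by rw [hv]; rfl
      rw [Matrix.mulVec, dotProduct] at this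
      simpa [hCm] using this
    have huniq := ode_unique A hA_cont (fun t => X t * Cm) (fun _ => 0) T
      (by
        intro i j t
        have hder : HasDerivAt (fun s => ∑ k, X s i k * Cm k j)
            (∑ k, (∑ k', A t i k' * X t k' k) * Cm k j) t := by
          apply HasDerivAt.fun_sum
          intro k _
          exact (hX' i k t).mul_const (Cm k j)
        have hfun : (fun s => (X s * Cm) i j) = (fun s => ∑ k, X s i k * Cm k j) := by
          funext s; rw [Matrix.mul_apply]
        have hgoal : (∑ k, A t i k * (X t * Cm) k j)
            = ∑ k, (∑ k', A t i k' * X t k' k) * Cm k j := by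
          have h1 : (∑ k, A t i k * (X t * Cm) k j) = (A t * (X t * Cm)) i j := by
            rw [Matrix.mul_apply]
          have h2 : (∑ k, (∑ k', A t i k' * X t k' k) * Cm k j)
              = ((A t * X t) * Cm) i j := by
            rw [Matrix.mul_apply]
            exact Finset.sum_congr rfl fun k _ => by rw [Matrix.mul_apply]
          rw [h1, h2, mul_assoc]
        show HasDerivAt (fun s => (X s * Cm) i j) _ t
        rw [hfun, hgoal]
        exact hder)
      (by
        intro i j t
        have : (∑ k, A t i k * (0 : Matrix (Fin N) (Fin N) ℂ) k j) = 0 := by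
          simp
        rw [this]
        simpa using hasDerivAt_const t ((0 : Matrix (Fin N) (Fin N) ℂ) i j))
      (by show X T * Cm = 0; exact hXC)
    have h0 : X 0 * Cm = 0 := huniq 0
    rw [hX0, one_mul] at h0
    apply hv0
    funext i
    exact congrFun (congrFun h0 i) i
  -- step 3 : take the logarithm
  obtain ⟨L, hL⟩ := exists_exp_eq_matrix (X T) hXTdet
  refine ⟨(T⁻¹ : ℝ) • L, fun t => X t * NormedSpace.exp (-(t • (T⁻¹ : ℝ) • L)), ?_, ?_⟩
  · intro t
    have hTF : (T : ℝ) • (T⁻¹ : ℝ) • L = L := by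
      rw [smul_smul, mul_inv_cancel₀ (ne_of_gt hT), one_smul]
    set F := (T⁻¹ : ℝ) • L with hF
    have hcomm : Commute (T • F) (t • F) :=
      ((Commute.refl F).smul_left T).smul_right t
    have hsplit : ((t + T) • F) = T • F + t • F := by
      rw [add_smul]; abel
    have hexp1 : NormedSpace.exp (-(T • F) + -(t • F))
        = NormedSpace.exp (-(T • F)) * NormedSpace.exp (-(t • F)) :=
      Matrix.exp_add_of_commute _ _ (hcomm.neg_left.neg_right)
    have hXTexp : X T = NormedSpace.exp (T • F) := by rw [hF, hTF, hL]
    have hcancel : NormedSpace.exp (T • F) * NormedSpace.exp (-(T • F)) = 1 := by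
      rw [← Matrix.exp_add_of_commute _ _ ((Commute.refl (T • F)).neg_right),
        add_neg_cancel, NormedSpace.exp_zero]
    calc X (t + T) * NormedSpace.exp (-((t + T) • F))
        = X t * X T * NormedSpace.exp (-(T • F) + -(t • F)) := by
          rw [hXmul t, hsplit, neg_add]
      _ = X t * (NormedSpace.exp (T • F) * NormedSpace.exp (-(T • F)))
            * NormedSpace.exp (-(t • F)) := by
          rw [hexp1, ← hXTexp]
          simp only [mul_assoc]
      _ = X t * NormedSpace.exp (-(t • F)) := by rw [hcancel, mul_one]
  · intro t
    set F := (T⁻¹ : ℝ) • L with hF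
    have hcancel : NormedSpace.exp (-(t • F)) * NormedSpace.exp (t • F) = 1 := by
      rw [← Matrix.exp_add_of_commute _ _ ((Commute.refl (t • F)).neg_left),
        neg_add_cancel, NormedSpace.exp_zero]
    rw [mul_assoc, hcancel, mul_one]
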